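/- Let k ≥ 2 be an integer, let c be a real number with 0 < c < 1, and let p₁, p₄, p₅ be real numbers with p₁ > c/k, p₅ > c/k and p₄ ≥ (k−1)c/k. Then c²(p₁² − p₁ + p₄² − p₄ + 2p₅² − 2p₅) + 2kc(p₁p₅ + p₄p₅) > 0. -/
import Mathlib

set_option maxHeartbeats 1000000 in

theorem stmt_7 (k : ℕ) (hk : 2 ≤ k) (c p1 p4 p5 : ℝ)
    (hc0 : 0 < c) (hc1 : c < 1)
    (h1 : p1 > c / k) (h5 : p5 > c / k) (h4 : p4 ≥ ((k : ℝ) - 1) * c / k) :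
    c ^ 2 * (p1 ^ 2 - p1 + p4 ^ 2 - p4 + 2 * p5 ^ 2 - 2 * p5)
      + 2 * k * c * (p1 * p5 + p4 * p5) > 0 := by
  have hk2 : (2:ℝ) ≤ (k:ℝ) := by exact_mod_cast hk
  have hkpos : (0:ℝ) < (k:ℝ) := by linarith
  have hx : (0:ℝ) < (k:ℝ) * p1 - c := by
    have := (div_lt_iff₀ hkpos).mp h1; linarith
  have hy : (0:ℝ) < (k:ℝ) * p5 - c := by
    have := (div_lt_iff₀ hkpos).mp h5; linarith
  have hz : (0:ℝ) ≤ (k:ℝ) * p4 - ((k:ℝ)-1) * c := by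
    have := (div_le_iff₀ hkpos).mp h4; linarith
  set x := (k:ℝ) * p1 - c with hxdef
  set y := (k:ℝ) * p5 - c with hydef
  set z := (k:ℝ) * p4 - ((k:ℝ)-1) * c with hzdef
  have hK : (0:ℝ) < (k:ℝ)^2 := by positivity
  have key : (k:ℝ)^2 * (c ^ 2 * (p1 ^ 2 - p1 + p4 ^ 2 - p4 + 2 * p5 ^ 2 - 2 * p5)
      + 2 * k * c * (p1 * p5 + p4 * p5))
      = c^2*x^2 + c^2*z^2 + 2*c^2*y^2 + 2*(k:ℝ)*c*x*y + 2*(k:ℝ)*c*y*z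
        + c^2*(2*c + (k:ℝ))*x + c^2*((k:ℝ) + 2*((k:ℝ)-1)*c)*z
        + c^2*(4*c + 2*(k:ℝ)^2 - 2*(k:ℝ))*y
        + c^3*((k:ℝ)^2 - 2*(k:ℝ)) + c^4*((k:ℝ)^2 - 2*(k:ℝ) + 4) := by
    rw [hxdef, hydef, hzdef]; ring
  have hkk : (0:ℝ) ≤ (k:ℝ)^2 - 2*(k:ℝ) := by
    have := mul_nonneg (le_of_lt hkpos) (by linarith : (0:ℝ) ≤ (k:ℝ) - 2)
    nlinarith
  have t1 : (0:ℝ) < c^2*x^2 := by positivity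
  have t2 : (0:ℝ) ≤ c^2*z^2 := by positivity
  have t3 : (0:ℝ) < 2*c^2*y^2 := by positivity
  have t4 : (0:ℝ) < 2*(k:ℝ)*c*x*y := by positivity
  have t5 : (0:ℝ) ≤ 2*(k:ℝ)*c*y*z := by positivity
  have t6 : (0:ℝ) < c^2*(2*c + (k:ℝ))*x := by positivity
  have t7 : (0:ℝ) ≤ c^2*((k:ℝ) + 2*((k:ℝ)-1)*c)*z := by
    apply mul_nonneg _ hz
    apply mul_nonneg (by positivity)
    have := mul_nonneg (by linarith : (0:ℝ) ≤ (k:ℝ) - 1) hc0.le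
    linarith
  have t8 : (0:ℝ) < c^2*(4*c + 2*(k:ℝ)^2 - 2*(k:ℝ))*y := by
    apply mul_pos _ hy
    apply mul_pos (by positivity)
    linarith
  have t9 : (0:ℝ) ≤ c^3*((k:ℝ)^2 - 2*(k:ℝ)) := by positivity
  have t10 : (0:ℝ) < c^4*((k:ℝ)^2 - 2*(k:ℝ) + 4) := by
    apply mul_pos (by positivity); linarith
  have hpos : 0 < (k:ℝ)^2 * (c ^ 2 * (p1 ^ 2 - p1 + p4 ^ 2 - p4 + 2 * p5 ^ 2 - 2 * p5)
      + 2 * k * c * (p1 * p5 + p4 * p5)) := by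
    rw [key]; linarith
  have h := mul_pos (inv_pos.mpr hK) hpos
  rwa [inv_mul_cancel_left₀ (ne_of_gt hK)] at h
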